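/- Upper bound on the smoothed class probability at a perturbed input (case ψ > ψ̃): Let x, x̃ ∈ X, let z★ be a longest common subsequence of x and x̃ with L := |z★|, let ψ, ψ̃ ∈ (0,1) with ψ > ψ̃, let f̄ : X → Y be any base classifier and y ∈ Y. Set μ := p_y(x; f̄, ψ) and let H★ := max{ H ∈ {0,…,L} : Σ_{i=H}^{L} B(L, ψ, i) ≥ μ } (this set is nonempty since Σ_{i=0}^{L} B(L, ψ, i) = 1 ≥ μ). Then p_y(x̃; f̄, ψ̃) ≤ (ψ̃^{|x̃|−L} / ψ^{|x|−L}) · ( Σ_{i=H★+1}^{L} B(L, ψ̃, i) + B(L, ψ̃, H★) · ⌈ (μ − Σ_{j=H★+1}^{L} B(L, ψ, j)) / B(L, ψ, H★) ⌉_{C(L,H★)^{−1}} ) + 1 − ψ̃^{|x̃|−L}. -/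

import Mathlib

/-- Apply a deletion indicator: keep the tokens at positions `i` with `ε i = true`, in order. -/
def applyDel {Ω : Type*} (x : List Ω) (ε : Fin x.length → Bool) : List Ω :=
  (List.finRange x.length).filterMap fun i => if ε i then some (x.get i) else none

/-- Number of retained tokens `|ε|`. -/
def retained {n : ℕ} (ε : Fin n → Bool) : ℕ :=
  (Finset.univ.filter fun i => ε i = true).card

/-- `q_ψ(ε|x) = ψ^{|x|-|ε|} (1-ψ)^{|ε|}`. -/
noncomputable def qdel {Ω : Type*} (ψ : ℝ) (x : List Ω) (ε : Fin x.length → Bool) : ℝ :=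
  ψ ^ (x.length - retained ε) * (1 - ψ) ^ (retained ε)

/-- The score `s_{f̄,ψ}(ε, x) = q_ψ(ε|x)·1[f̄(apply(x,ε)) = y]`. -/
noncomputable def score {Ω Y : Type*} [DecidableEq Y] (f : List Ω → Y) (y : Y) (ψ : ℝ)
    (x : List Ω) (ε : Fin x.length → Bool) : ℝ :=
  qdel ψ x ε * (if f (applyDel x ε) = y then 1 else 0)

/-- The smoothed class probability `p_y(x; f̄, ψ) = Σ_{ε ∈ E(x)} s_{f̄,ψ}(ε, x)`. -/
noncomputable def smoothedProb {Ω Y : Type*} [DecidableEq Y] (f : List Ω → Y) (y : Y)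
    (ψ : ℝ) (x : List Ω) : ℝ :=
  ∑ ε : Fin x.length → Bool, score f y ψ x ε

/-- `z` is a longest common subsequence of `x` and `x̃`. -/
def IsLCS {Ω : Type*} (z x xt : List Ω) : Prop :=
  z.Sublist x ∧ z.Sublist xt ∧ ∀ w : List Ω, w.Sublist x → w.Sublist xt → w.length ≤ z.length

/-- The binomial pmf `B(n, p, k) = C(n,k)·(1−p)^k·p^{n−k}`. -/
noncomputable def binomPMF (n : ℕ) (p : ℝ) (k : ℕ) : ℝ :=
  (n.choose k : ℝ) * (1 - p) ^ k * p ^ (n - k)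

/-- Gridded floor `⌊a⌋_v = v·⌊a/v⌋`. -/
noncomputable def gfloor (a v : ℝ) : ℝ := v * (⌊a / v⌋ : ℤ)

/-- Gridded ceiling `⌈a⌉_v = v·⌈a/v⌉`. -/
noncomputable def gceil (a v : ℝ) : ℝ := v * (⌈a / v⌉ : ℤ)

/-! ### Auxiliary combinatorial lemmas -/

lemma filterMap_if {α β : Type*} (p : α → Bool) (f : α → β) (l : List α) :
    l.filterMap (fun a => if p a then some (f a) else none) = (l.filter p).map f := by
  induction l with
  | nil => rfl
  | cons a l ih => by_cases h : p a <;> simp [List.filterMap_cons, List.filter_cons, h, ih]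

lemma applyDel_eq {Ω : Type*} (x : List Ω) (ε : Fin x.length → Bool) :
    applyDel x ε = ((List.finRange x.length).filter ε).map x.get :=
  filterMap_if _ _ _

/-- extend a deletion pattern on `z` to one on `x` along an order embedding. -/
def extFun {L n : ℕ} (e : Fin L ↪o Fin n) (δ : Fin L → Bool) : Fin n → Bool :=
  fun i => decide (∃ j, e j = i ∧ δ j = true)

lemma extFun_apply {L n : ℕ} (e : Fin L ↪o Fin n) (δ : Fin L → Bool) (j : Fin L) :
    extFun e δ (e j) = δ j := by
  unfold extFun
  by_cases h : δ j = true
  · rw [h, decide_eq_true_eq]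
    exact ⟨j, rfl, h⟩
  · simp only [Bool.not_eq_true] at h
    rw [h, decide_eq_false_iff_not]
    rintro ⟨j', hj', hδ⟩
    rw [e.injective hj'] at hδ
    rw [h] at hδ
    exact Bool.false_ne_true hδ

lemma extFun_injective {L n : ℕ} (e : Fin L ↪o Fin n) : Function.Injective (extFun e) := by
  intro δ δ' h
  funext j
  have := congrFun h (e j)
  rwa [extFun_apply, extFun_apply] at this

lemma extFun_filter {L n : ℕ} (e : Fin L ↪o Fin n) (δ : Fin L → Bool) :
    (List.finRange n).filter (extFun e δ) = ((List.finRange L).filter δ).map e := by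
  have hanti : IsAntisymm (Fin n) (· < ·) := ⟨fun a b h1 h2 => absurd h1 (asymm h2)⟩
  have hs1 : List.Pairwise (· < ·) ((List.finRange n).filter (extFun e δ)) :=
    (List.pairwise_lt_finRange n).sublist List.filter_sublist
  have hs2 : List.Pairwise (· < ·) (((List.finRange L).filter δ).map e) := by
    rw [List.pairwise_map]
    exact ((List.pairwise_lt_finRange L).sublist List.filter_sublist).imp
      (fun h => e.lt_iff_lt.mpr h)
  have hn1 : ((List.finRange n).filter (extFun e δ)).Nodup :=
    ((List.nodup_finRange n).filter _)
  have hn2 : (((List.finRange L).filter δ).map e).Nodup :=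
    (((List.nodup_finRange L).filter _)).map e.injective
  refine List.Perm.eq_of_pairwise (fun a b _ _ h1 h2 => absurd h1 (asymm h2)) hs1 hs2 ?_
  rw [List.perm_ext_iff_of_nodup hn1 hn2]
  intro i
  simp only [List.mem_filter, List.mem_finRange, true_and, List.mem_map, extFun,
    decide_eq_true_eq]
  constructor
  · rintro ⟨j, rfl, hj⟩
    exact ⟨j, by simp [hj], rfl⟩
  · rintro ⟨j, hj, rfl⟩
    exact ⟨j, rfl, by simpa using hj⟩

lemma applyDel_extFun {Ω : Type*} {x z : List Ω} (e : Fin z.length ↪o Fin x.length)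
    (he : ∀ j, z.get j = x.get (e j)) (δ : Fin z.length → Bool) :
    applyDel x (extFun e δ) = applyDel z δ := by
  rw [applyDel_eq, applyDel_eq, extFun_filter, List.map_map]
  exact List.map_congr_left fun j hj => (he j).symm

lemma retained_extFun {L n : ℕ} (e : Fin L ↪o Fin n) (δ : Fin L → Bool) :
    retained (extFun e δ) = retained δ := by
  unfold retained
  rw [show (Finset.univ.filter fun i => extFun e δ i = true)
      = (Finset.univ.filter fun j => δ j = true).image e by
    ext i
    simp only [Finset.mem_filter, Finset.mem_univ, true_and, Finset.mem_image, extFun,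
      decide_eq_true_eq]
    constructor
    · rintro ⟨j, rfl, hj⟩; exact ⟨j, hj, rfl⟩
    · rintro ⟨j, hj, rfl⟩; exact ⟨j, rfl, hj⟩]
  exact Finset.card_image_of_injective _ e.injective

lemma retained_le {n : ℕ} (ε : Fin n → Bool) : retained ε ≤ n := by
  simpa [retained] using (Finset.card_filter_le Finset.univ _).trans (le_of_eq (by simp))

/-! ### Counting and binomial sums -/

lemma card_retained (L k : ℕ) :
    ((Finset.univ : Finset (Fin L → Bool)).filter fun δ => retained δ = k).card
      = L.choose k := by
  have h : ((Finset.univ : Finset (Fin L → Bool)).filter fun δ => retained δ = k).card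
      = (Finset.powersetCard k (Finset.univ : Finset (Fin L))).card := by
    refine Finset.card_bij' (fun δ _ => Finset.univ.filter fun i => δ i = true)
      (fun s _ => fun i => decide (i ∈ s)) ?_ ?_ ?_ ?_
    · intro δ hδ
      simp only [Finset.mem_filter, Finset.mem_univ, true_and] at hδ
      rw [Finset.mem_powersetCard]
      exact ⟨fun i _ => Finset.mem_univ i, hδ⟩
    · intro s hs
      rw [Finset.mem_powersetCard] at hs
      rw [Finset.mem_filter]
      simp only [Finset.mem_filter, Finset.mem_univ, true_and, retained]
      rw [← hs.2]
      congr 1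
      ext i
      simp
    · intro δ hδ
      funext i
      simp
    · intro s hs
      ext i
      simp
  rw [h, Finset.card_powersetCard]
  simp

lemma sum_by_retained (L : ℕ) (G : ℕ → ℝ) :
    ∑ δ : Fin L → Bool, G (retained δ)
      = ∑ k ∈ Finset.range (L + 1), (L.choose k : ℝ) * G k := by
  have hmap : ∀ δ : Fin L → Bool, δ ∈ Finset.univ → retained δ ∈ Finset.range (L + 1) := by
    intro δ _
    rw [Finset.mem_range, Nat.lt_succ_iff]
    exact retained_le δ
  rw [← Finset.sum_fiberwise_of_maps_to hmap (fun δ => G (retained δ))]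
  refine Finset.sum_congr rfl fun k _ => ?_
  rw [Finset.sum_congr rfl (fun δ hδ => by
      rw [(Finset.mem_filter.mp hδ).2]),
    Finset.sum_const, card_retained]
  simp [mul_comm]

lemma sum_q_eq (L : ℕ) (ψ : ℝ) (T : ℕ → ℝ) :
    ∑ δ : Fin L → Bool, ψ ^ (L - retained δ) * (1 - ψ) ^ retained δ * T (retained δ)
      = ∑ k ∈ Finset.range (L + 1), binomPMF L ψ k * T k := by
  rw [sum_by_retained L (fun k => ψ ^ (L - k) * (1 - ψ) ^ k * T k)]
  refine Finset.sum_congr rfl fun k _ => ?_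
  unfold binomPMF
  ring

lemma sum_binomPMF (L : ℕ) (ψ : ℝ) :
    ∑ k ∈ Finset.range (L + 1), binomPMF L ψ k = 1 := by
  have := add_pow (1 - ψ) ψ L
  simp only [sub_add_cancel, one_pow] at this
  rw [eq_comm, this]
  refine Finset.sum_congr rfl fun k _ => ?_
  unfold binomPMF
  ring

lemma sum_q_one (L : ℕ) (ψ : ℝ) :
    ∑ δ : Fin L → Bool, ψ ^ (L - retained δ) * (1 - ψ) ^ retained δ = 1 := by
  have := sum_q_eq L ψ (fun _ => 1)
  simp only [mul_one] at this
  rw [this, sum_binomPMF]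

/-! ### Neyman–Pearson style bound -/

lemma ratio_mono (ψ ψt : ℝ) (hψ : ψ ∈ Set.Ioo (0:ℝ) 1) (hψt : ψt ∈ Set.Ioo (0:ℝ) 1)
    (hle : ψt ≤ ψ) (L a b : ℕ) (hab : a ≤ b) (hbL : b ≤ L) :
    ψt ^ (L - a) * (1 - ψt) ^ a * (ψ ^ (L - b) * (1 - ψ) ^ b)
      ≤ ψt ^ (L - b) * (1 - ψt) ^ b * (ψ ^ (L - a) * (1 - ψ) ^ a) := by
  obtain ⟨hψ0, hψ1⟩ := hψ
  obtain ⟨hψt0, hψt1⟩ := hψt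
  obtain ⟨d, rfl⟩ : ∃ d, b = a + d := ⟨b - a, by omega⟩
  have h1 : L - a = (L - (a + d)) + d := by omega
  have key : ψt ^ d * (1 - ψ) ^ d ≤ (1 - ψt) ^ d * ψ ^ d := by
    rw [← mul_pow, ← mul_pow]
    exact pow_le_pow_left₀ (by nlinarith) (by nlinarith) d
  have e1 : ψt ^ (L - a) * (1 - ψt) ^ a * (ψ ^ (L - (a + d)) * (1 - ψ) ^ (a + d))
      = (ψt ^ (L - (a + d)) * (1 - ψt) ^ a * (ψ ^ (L - (a + d)) * (1 - ψ) ^ a))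
        * (ψt ^ d * (1 - ψ) ^ d) := by
    rw [h1]; ring
  have e2 : ψt ^ (L - (a + d)) * (1 - ψt) ^ (a + d) * (ψ ^ (L - a) * (1 - ψ) ^ a)
      = (ψt ^ (L - (a + d)) * (1 - ψt) ^ a * (ψ ^ (L - (a + d)) * (1 - ψ) ^ a))
        * ((1 - ψt) ^ d * ψ ^ d) := by
    rw [h1]; ring
  rw [e1, e2]
  apply mul_le_mul_of_nonneg_left key
  exact mul_nonneg (mul_nonneg (pow_nonneg hψt0.le _) (pow_nonneg (by linarith) _))
    (mul_nonneg (pow_nonneg hψ0.le _) (pow_nonneg (by linarith) _))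

lemma sum_binom_T (L H : ℕ) (hHL : H ≤ L) (ψ' c : ℝ) :
    ∑ k ∈ Finset.range (L + 1),
        binomPMF L ψ' k * (if H < k then 1 else if k = H then c else 0)
      = ∑ i ∈ Finset.Icc (H + 1) L, binomPMF L ψ' i + binomPMF L ψ' H * c := by
  rw [← Finset.sum_filter_add_sum_filter_not (Finset.range (L + 1)) (fun k => H < k)]
  congr 1
  · have hfil : (Finset.range (L + 1)).filter (fun k => H < k) = Finset.Icc (H + 1) L := by
      ext k
      simp only [Finset.mem_filter, Finset.mem_range, Finset.mem_Icc]
      omega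
    rw [hfil]
    refine Finset.sum_congr rfl fun k hk => ?_
    rw [Finset.mem_Icc] at hk
    rw [if_pos (by omega), mul_one]
  · refine (Finset.sum_eq_single_of_mem H ?_ ?_).trans ?_
    · simp only [Finset.mem_filter, Finset.mem_range]
      exact ⟨by omega, by omega⟩
    · intro b hb hbne
      simp only [Finset.mem_filter, Finset.mem_range, not_lt] at hb
      rw [if_neg (by omega), if_neg hbne, mul_zero]
    · rw [if_neg (by omega), if_pos rfl]

lemma np_bound (L H : ℕ) (hHL : H ≤ L) (ψ ψt : ℝ)
    (hψ : ψ ∈ Set.Ioo (0:ℝ) 1) (hψt : ψt ∈ Set.Ioo (0:ℝ) 1) (hle : ψt ≤ ψ)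
    (μ : ℝ) (t : (Fin L → Bool) → ℝ) (ht0 : ∀ δ, 0 ≤ t δ) (ht1 : ∀ δ, t δ ≤ 1)
    (hcon : ∑ δ : Fin L → Bool, ψ ^ (L - retained δ) * (1 - ψ) ^ retained δ * t δ ≤ μ)
    (hup : μ ≤ ∑ i ∈ Finset.Icc H L, binomPMF L ψ i)
    (hlo : ∑ j ∈ Finset.Icc (H + 1) L, binomPMF L ψ j ≤ μ) :
    ∑ δ : Fin L → Bool, ψt ^ (L - retained δ) * (1 - ψt) ^ retained δ * t δ ≤
      ∑ i ∈ Finset.Icc (H + 1) L, binomPMF L ψt i +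
        binomPMF L ψt H *
          ((μ - ∑ j ∈ Finset.Icc (H + 1) L, binomPMF L ψ j) / binomPMF L ψ H) := by
  obtain ⟨hψ0, hψ1⟩ := hψ
  obtain ⟨hψt0, hψt1⟩ := hψt
  set S := ∑ j ∈ Finset.Icc (H + 1) L, binomPMF L ψ j with hS
  have hBHpos : 0 < binomPMF L ψ H := by
    unfold binomPMF
    exact mul_pos (mul_pos (by exact_mod_cast Nat.choose_pos hHL)
      (pow_pos (by linarith) _)) (pow_pos hψ0 _)
  set c : ℝ := (μ - S) / binomPMF L ψ H with hc
  have hc0 : 0 ≤ c := div_nonneg (by linarith) hBHpos.le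
  have hc1 : c ≤ 1 := by
    rw [hc, div_le_one hBHpos]
    have hsplit : ∑ i ∈ Finset.Icc H L, binomPMF L ψ i = binomPMF L ψ H + S := by
      rw [show Finset.Icc H L = insert H (Finset.Icc (H + 1) L) from by
        ext k; simp only [Finset.mem_insert, Finset.mem_Icc]; omega]
      rw [Finset.sum_insert (by simp)]
    linarith [hup.trans_eq hsplit]
  set T : ℕ → ℝ := fun k => if H < k then 1 else if k = H then c else 0 with hT
  have hqT : ∑ δ : Fin L → Bool, ψ ^ (L - retained δ) * (1 - ψ) ^ retained δ * T (retained δ)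
      = μ := by
    rw [sum_q_eq, sum_binom_T L H hHL, hc]
    field_simp
    rw [← hS]; ring
  have hqtT : ∑ δ : Fin L → Bool, ψt ^ (L - retained δ) * (1 - ψt) ^ retained δ * T (retained δ)
      = ∑ i ∈ Finset.Icc (H + 1) L, binomPMF L ψt i + binomPMF L ψt H * c := by
    rw [sum_q_eq, sum_binom_T L H hHL]
  have hqHpos : 0 < ψ ^ (L - H) * (1 - ψ) ^ H :=
    mul_pos (pow_pos hψ0 _) (pow_pos (by linarith) _)
  set lam : ℝ := (ψt ^ (L - H) * (1 - ψt) ^ H) / (ψ ^ (L - H) * (1 - ψ) ^ H) with hlam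
  have hlam0 : 0 ≤ lam :=
    div_nonneg (mul_nonneg (pow_nonneg hψt0.le _) (pow_nonneg (by linarith) _)) hqHpos.le
  have key : ∀ δ : Fin L → Bool,
      ψt ^ (L - retained δ) * (1 - ψt) ^ retained δ * t δ ≤
        ψt ^ (L - retained δ) * (1 - ψt) ^ retained δ * T (retained δ)
          + lam * (ψ ^ (L - retained δ) * (1 - ψ) ^ retained δ * t δ)
          - lam * (ψ ^ (L - retained δ) * (1 - ψ) ^ retained δ * T (retained δ)) := by
    intro δ
    set k := retained δ with hk
    have hkL : k ≤ L := retained_le δ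
    have hprod : (t δ - T k) *
        (ψt ^ (L - k) * (1 - ψt) ^ k - lam * (ψ ^ (L - k) * (1 - ψ) ^ k)) ≤ 0 := by
      rcases lt_trichotomy k H with hlt | heq | hgt
      · have hT0 : T k = 0 := by simp only [hT]; rw [if_neg (by omega), if_neg (by omega)]
        have hratio : ψt ^ (L - k) * (1 - ψt) ^ k ≤ lam * (ψ ^ (L - k) * (1 - ψ) ^ k) := by
          rw [hlam, div_mul_eq_mul_div, le_div_iff₀ hqHpos]
          exact ratio_mono ψ ψt ⟨hψ0, hψ1⟩ ⟨hψt0, hψt1⟩ hle L k H hlt.le hHL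
        have h1 : 0 ≤ t δ - T k := by rw [hT0]; simpa using ht0 δ
        exact mul_nonpos_of_nonneg_of_nonpos h1 (by linarith)
      · have : lam * (ψ ^ (L - k) * (1 - ψ) ^ k) = ψt ^ (L - k) * (1 - ψt) ^ k := by
          rw [heq, hlam, div_mul_cancel₀ _ hqHpos.ne']
        rw [this]
        simp
      · have hT1 : T k = 1 := by simp only [hT]; rw [if_pos hgt]
        have hratio : lam * (ψ ^ (L - k) * (1 - ψ) ^ k) ≤ ψt ^ (L - k) * (1 - ψt) ^ k := by
          rw [hlam, div_mul_eq_mul_div, div_le_iff₀ hqHpos]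
          exact ratio_mono ψ ψt ⟨hψ0, hψ1⟩ ⟨hψt0, hψt1⟩ hle L H k hgt.le hkL
        have h1 : t δ - T k ≤ 0 := by rw [hT1]; simpa using ht1 δ
        exact mul_nonpos_of_nonpos_of_nonneg h1 (by linarith)
    nlinarith [hprod]
  calc ∑ δ : Fin L → Bool, ψt ^ (L - retained δ) * (1 - ψt) ^ retained δ * t δ
      ≤ ∑ δ : Fin L → Bool,
          (ψt ^ (L - retained δ) * (1 - ψt) ^ retained δ * T (retained δ)
            + lam * (ψ ^ (L - retained δ) * (1 - ψ) ^ retained δ * t δ)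
            - lam * (ψ ^ (L - retained δ) * (1 - ψ) ^ retained δ * T (retained δ))) :=
        Finset.sum_le_sum fun δ _ => key δ
    _ = (∑ δ : Fin L → Bool, ψt ^ (L - retained δ) * (1 - ψt) ^ retained δ * T (retained δ))
          + lam * (∑ δ : Fin L → Bool, ψ ^ (L - retained δ) * (1 - ψ) ^ retained δ * t δ)
          - lam * (∑ δ : Fin L → Bool,
              ψ ^ (L - retained δ) * (1 - ψ) ^ retained δ * T (retained δ)) := by
        rw [Finset.sum_sub_distrib, Finset.sum_add_distrib, Finset.mul_sum, Finset.mul_sum]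
    _ ≤ (∑ δ : Fin L → Bool, ψt ^ (L - retained δ) * (1 - ψt) ^ retained δ * T (retained δ))
          + lam * μ - lam * μ := by
        rw [hqT]
        have := mul_le_mul_of_nonneg_left hcon hlam0
        linarith
    _ = ∑ i ∈ Finset.Icc (H + 1) L, binomPMF L ψt i + binomPMF L ψt H * c := by
        rw [hqtT]; ring

/-! ### Sums over extended patterns -/

lemma score_extFun {Ω Y : Type*} [DecidableEq Y] (f : List Ω → Y) (y : Y) (ψ' : ℝ)
    (x z : List Ω) (e : Fin z.length ↪o Fin x.length) (he : ∀ j, z.get j = x.get (e j))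
    (hlen : z.length ≤ x.length) (δ : Fin z.length → Bool) :
    score f y ψ' x (extFun e δ)
      = ψ' ^ (x.length - z.length) *
        (ψ' ^ (z.length - retained δ) * (1 - ψ') ^ retained δ *
          (if f (applyDel z δ) = y then 1 else 0)) := by
  unfold score qdel
  rw [applyDel_extFun e he, retained_extFun]
  have h : x.length - retained δ = (x.length - z.length) + (z.length - retained δ) := by
    have := retained_le δ
    omega
  rw [h, pow_add]
  ring

lemma qdel_extFun {Ω : Type*} (ψ' : ℝ) (x z : List Ω) (e : Fin z.length ↪o Fin x.length)
    (hlen : z.length ≤ x.length) (δ : Fin z.length → Bool) :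
    qdel ψ' x (extFun e δ)
      = ψ' ^ (x.length - z.length) *
        (ψ' ^ (z.length - retained δ) * (1 - ψ') ^ retained δ) := by
  unfold qdel
  rw [retained_extFun]
  have h : x.length - retained δ = (x.length - z.length) + (z.length - retained δ) := by
    have := retained_le δ
    omega
  rw [h, pow_add]
  ring

lemma sum_image_score {Ω Y : Type*} [DecidableEq Y] (f : List Ω → Y) (y : Y) (ψ' : ℝ)
    (x z : List Ω) (e : Fin z.length ↪o Fin x.length) (he : ∀ j, z.get j = x.get (e j))
    (hlen : z.length ≤ x.length) :
    ∑ ε ∈ Finset.univ.image (extFun e), score f y ψ' x ε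
      = ψ' ^ (x.length - z.length) *
          ∑ δ : Fin z.length → Bool,
            ψ' ^ (z.length - retained δ) * (1 - ψ') ^ retained δ *
              (if f (applyDel z δ) = y then 1 else 0) := by
  rw [Finset.sum_image (fun a _ b _ h => extFun_injective e h), Finset.mul_sum]
  exact Finset.sum_congr rfl fun δ _ => score_extFun f y ψ' x z e he hlen δ

lemma sum_image_qdel {Ω : Type*} (ψ' : ℝ) (x z : List Ω) (e : Fin z.length ↪o Fin x.length)
    (hlen : z.length ≤ x.length) :
    ∑ ε ∈ Finset.univ.image (extFun e), qdel ψ' x ε = ψ' ^ (x.length - z.length) := by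
  rw [Finset.sum_image (fun a _ b _ h => extFun_injective e h)]
  rw [Finset.sum_congr rfl fun δ _ => qdel_extFun ψ' x z e hlen δ, ← Finset.mul_sum,
    sum_q_one, mul_one]

lemma qdel_nonneg {Ω : Type*} {ψ' : ℝ} (h0 : 0 ≤ ψ') (h1 : ψ' ≤ 1) (x : List Ω)
    (ε : Fin x.length → Bool) : 0 ≤ qdel ψ' x ε :=
  mul_nonneg (pow_nonneg h0 _) (pow_nonneg (by linarith) _)

lemma score_nonneg {Ω Y : Type*} [DecidableEq Y] (f : List Ω → Y) (y : Y) {ψ' : ℝ}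
    (h0 : 0 ≤ ψ') (h1 : ψ' ≤ 1) (x : List Ω) (ε : Fin x.length → Bool) :
    0 ≤ score f y ψ' x ε :=
  mul_nonneg (qdel_nonneg h0 h1 x ε) (by positivity)

lemma score_le_qdel {Ω Y : Type*} [DecidableEq Y] (f : List Ω → Y) (y : Y) {ψ' : ℝ}
    (h0 : 0 ≤ ψ') (h1 : ψ' ≤ 1) (x : List Ω) (ε : Fin x.length → Bool) :
    score f y ψ' x ε ≤ qdel ψ' x ε := by
  unfold score
  have := qdel_nonneg h0 h1 x ε
  split <;> nlinarith

lemma sum_qdel_one {Ω : Type*} (ψ' : ℝ) (x : List Ω) :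
    ∑ ε : Fin x.length → Bool, qdel ψ' x ε = 1 := by
  unfold qdel
  exact sum_q_one x.length ψ'

lemma le_gceil (a v : ℝ) (hv : 0 < v) : a ≤ gceil a v := by
  unfold gceil
  calc a = a / v * v := (div_mul_cancel₀ a hv.ne').symm
    _ ≤ (⌈a / v⌉ : ℝ) * v := mul_le_mul_of_nonneg_right (Int.le_ceil _) hv.le
    _ = v * (⌈a / v⌉ : ℝ) := mul_comm _ _

/-- upper bound on the smoothed class probability at a perturbed input,
case `ψ > ψ̃`. -/
theorem stmt14 {Ω Y : Type*} [DecidableEq Y] (x xt zs : List Ω)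
    (hz : IsLCS zs x xt) (L : ℕ) (hL : L = zs.length)
    (ψ ψt : ℝ) (hψ : ψ ∈ Set.Ioo (0 : ℝ) 1) (hψt : ψt ∈ Set.Ioo (0 : ℝ) 1)
    (hgt : ψ > ψt)
    (f : List Ω → Y) (y : Y)
    (μ : ℝ) (hμ : μ = smoothedProb f y ψ x)
    (H : ℕ)
    (hH : H = sSup {h | h ≤ L ∧ μ ≤ ∑ i ∈ Finset.Icc h L, binomPMF L ψ i}) :
    smoothedProb f y ψt xt ≤
      ψt ^ (xt.length - L) / ψ ^ (x.length - L) *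
        (∑ i ∈ Finset.Icc (H + 1) L, binomPMF L ψt i +
          binomPMF L ψt H *
            gceil ((μ - ∑ j ∈ Finset.Icc (H + 1) L, binomPMF L ψ j) / binomPMF L ψ H)
              ((L.choose H : ℝ)⁻¹)) +
      1 - ψt ^ (xt.length - L) := by
  obtain ⟨hzx, hzxt, -⟩ := hz
  obtain ⟨hψ0, hψ1⟩ := hψ
  obtain ⟨hψt0, hψt1⟩ := hψt
  subst hL
  set L := zs.length
  obtain ⟨e, he⟩ := List.sublist_iff_exists_fin_orderEmbedding_get_eq.mp hzx
  obtain ⟨e', he'⟩ := List.sublist_iff_exists_fin_orderEmbedding_get_eq.mp hzxt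
  have hLn : L ≤ x.length := hzx.length_le
  have hLm : L ≤ xt.length := hzxt.length_le
  -- basic bounds on μ
  have hμ0 : 0 ≤ μ := by
    rw [hμ]
    exact Finset.sum_nonneg fun ε _ => score_nonneg f y hψ0.le hψ1.le x ε
  have hμ1 : μ ≤ 1 := by
    rw [hμ, ← sum_qdel_one ψ x]
    exact Finset.sum_le_sum fun ε _ => score_le_qdel f y hψ0.le hψ1.le x ε
  -- properties of H
  set 𝒮 : Set ℕ := {h | h ≤ L ∧ μ ≤ ∑ i ∈ Finset.Icc h L, binomPMF L ψ i} with h𝒮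
  have h0mem : 0 ∈ 𝒮 := by
    refine ⟨Nat.zero_le L, ?_⟩
    rw [show Finset.Icc 0 L = Finset.range (L + 1) from by
      ext k; simp only [Finset.mem_Icc, Finset.mem_range]; omega]
    rw [sum_binomPMF]
    exact hμ1
  have hbdd : BddAbove 𝒮 := ⟨L, fun h hh => hh.1⟩
  have hHmem : H ∈ 𝒮 := hH ▸ Nat.sSup_mem ⟨0, h0mem⟩ hbdd
  have hHL : H ≤ L := hHmem.1
  have hup : μ ≤ ∑ i ∈ Finset.Icc H L, binomPMF L ψ i := hHmem.2
  have hlo : ∑ j ∈ Finset.Icc (H + 1) L, binomPMF L ψ j ≤ μ := by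
    rcases eq_or_lt_of_le hHL with hEq | hlt
    · rw [show Finset.Icc (H + 1) L = ∅ from by
        ext k; simp only [Finset.mem_Icc, Finset.notMem_empty, iff_false]; omega]
      simpa using hμ0
    · by_contra hcon
      push_neg at hcon
      have hmem : H + 1 ∈ 𝒮 := ⟨by omega, hcon.le⟩
      have := le_csSup hbdd hmem
      rw [← hH] at this
      omega
  -- the NP function
  set g : (Fin L → Bool) → ℝ := fun δ => if f (applyDel zs δ) = y then 1 else 0 with hg
  have hg0 : ∀ δ, 0 ≤ g δ := fun δ => by rw [hg]; positivity
  have hg1 : ∀ δ, g δ ≤ 1 := fun δ => by rw [hg]; dsimp only; split <;> norm_num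
  set t : (Fin L → Bool) → ℝ := fun δ => ψ ^ (x.length - L) * g δ with ht
  have hψpow0 : (0:ℝ) < ψ ^ (x.length - L) := pow_pos hψ0 _
  have hψpow1 : ψ ^ (x.length - L) ≤ 1 := pow_le_one₀ hψ0.le hψ1.le
  -- constraint: ∑ q t ≤ μ
  have hconstraint :
      ∑ δ : Fin L → Bool, ψ ^ (L - retained δ) * (1 - ψ) ^ retained δ * t δ ≤ μ := by
    have hsub : ∑ ε ∈ Finset.univ.image (extFun e), score f y ψ x ε ≤ μ := by
      rw [hμ]
      exact Finset.sum_le_sum_of_subset_of_nonneg (Finset.subset_univ _)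
        (fun ε _ _ => score_nonneg f y hψ0.le hψ1.le x ε)
    rw [sum_image_score f y ψ x zs e he hLn, Finset.mul_sum] at hsub
    calc ∑ δ : Fin L → Bool, ψ ^ (L - retained δ) * (1 - ψ) ^ retained δ * t δ
        = ∑ δ : Fin L → Bool,
            ψ ^ (x.length - L) *
              (ψ ^ (L - retained δ) * (1 - ψ) ^ retained δ * g δ) := by
          refine Finset.sum_congr rfl fun δ _ => ?_
          rw [ht]
          ring
      _ ≤ μ := hsub
  have hnp := np_bound L H hHL ψ ψt ⟨hψ0, hψ1⟩ ⟨hψt0, hψt1⟩ hgt.le μ t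
    (fun δ => mul_nonneg hψpow0.le (hg0 δ))
    (fun δ => mul_le_one₀ hψpow1 (hg0 δ) (hg1 δ))
    hconstraint hup hlo
  -- decompose the smoothed probability at xt
  set img : Finset (Fin xt.length → Bool) := Finset.univ.image (extFun e') with himg
  have hdecomp : smoothedProb f y ψt xt
      = (∑ ε ∈ Finset.univ \ img, score f y ψt xt ε) + ∑ ε ∈ img, score f y ψt xt ε := by
    rw [smoothedProb, ← Finset.sum_sdiff (Finset.subset_univ img)]
  have hrest : ∑ ε ∈ Finset.univ \ img, score f y ψt xt ε ≤ 1 - ψt ^ (xt.length - L) := by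
    have h1 : ∑ ε ∈ Finset.univ \ img, score f y ψt xt ε
        ≤ ∑ ε ∈ Finset.univ \ img, qdel ψt xt ε :=
      Finset.sum_le_sum fun ε _ => score_le_qdel f y hψt0.le hψt1.le xt ε
    have h2 : (∑ ε ∈ Finset.univ \ img, qdel ψt xt ε) + ∑ ε ∈ img, qdel ψt xt ε = 1 := by
      rw [Finset.sum_sdiff (Finset.subset_univ img)]
      exact sum_qdel_one ψt xt
    rw [himg] at h2 ⊢
    rw [sum_image_qdel ψt xt zs e' hLm] at h2
    linarith
  have himgsum : ∑ ε ∈ img, score f y ψt xt ε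
      = ψt ^ (xt.length - L) *
          ∑ δ : Fin L → Bool, ψt ^ (L - retained δ) * (1 - ψt) ^ retained δ * g δ := by
    rw [himg, sum_image_score f y ψt xt zs e' he' hLm]
  -- from the NP bound to the g-sum
  have hAt : ∑ δ : Fin L → Bool, ψt ^ (L - retained δ) * (1 - ψt) ^ retained δ * t δ
      = ψ ^ (x.length - L) *
          ∑ δ : Fin L → Bool, ψt ^ (L - retained δ) * (1 - ψt) ^ retained δ * g δ := by
    rw [Finset.mul_sum]
    refine Finset.sum_congr rfl fun δ _ => ?_
    rw [ht]
    ring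
  set RHS0 : ℝ := ∑ i ∈ Finset.Icc (H + 1) L, binomPMF L ψt i +
      binomPMF L ψt H *
        ((μ - ∑ j ∈ Finset.Icc (H + 1) L, binomPMF L ψ j) / binomPMF L ψ H) with hRHS0
  have hgsum : ∑ δ : Fin L → Bool, ψt ^ (L - retained δ) * (1 - ψt) ^ retained δ * g δ
      ≤ RHS0 / ψ ^ (x.length - L) := by
    rw [le_div_iff₀ hψpow0]
    calc (∑ δ : Fin L → Bool, ψt ^ (L - retained δ) * (1 - ψt) ^ retained δ * g δ)
          * ψ ^ (x.length - L)
        = ∑ δ : Fin L → Bool, ψt ^ (L - retained δ) * (1 - ψt) ^ retained δ * t δ := by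
          rw [hAt]; ring
      _ ≤ RHS0 := hnp
  -- upgrade RHS0 with the gridded ceiling
  have hBtH0 : 0 ≤ binomPMF L ψt H := by
    unfold binomPMF
    exact mul_nonneg (mul_nonneg (by positivity) (pow_nonneg (by linarith) _))
      (pow_nonneg hψt0.le _)
  have hvpos : (0:ℝ) < (L.choose H : ℝ)⁻¹ := by
    have := Nat.choose_pos hHL
    positivity
  have hRHS0le : RHS0 ≤ ∑ i ∈ Finset.Icc (H + 1) L, binomPMF L ψt i +
      binomPMF L ψt H *
        gceil ((μ - ∑ j ∈ Finset.Icc (H + 1) L, binomPMF L ψ j) / binomPMF L ψ H)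
          ((L.choose H : ℝ)⁻¹) := by
    rw [hRHS0]
    have := le_gceil ((μ - ∑ j ∈ Finset.Icc (H + 1) L, binomPMF L ψ j) / binomPMF L ψ H)
      ((L.choose H : ℝ)⁻¹) hvpos
    nlinarith [hBtH0]
  -- final assembly
  have hψtpow0 : (0:ℝ) ≤ ψt ^ (xt.length - L) := pow_nonneg hψt0.le _
  have hfrac : ψt ^ (xt.length - L) * (RHS0 / ψ ^ (x.length - L))
      = ψt ^ (xt.length - L) / ψ ^ (x.length - L) * RHS0 := by ring
  have hfinal : smoothedProb f y ψt xt
      ≤ ψt ^ (xt.length - L) / ψ ^ (x.length - L) * RHS0 + 1 - ψt ^ (xt.length - L) := by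
    rw [hdecomp, himgsum]
    have h1 : ψt ^ (xt.length - L) *
        (∑ δ : Fin L → Bool, ψt ^ (L - retained δ) * (1 - ψt) ^ retained δ * g δ)
        ≤ ψt ^ (xt.length - L) * (RHS0 / ψ ^ (x.length - L)) :=
      mul_le_mul_of_nonneg_left hgsum hψtpow0
    rw [hfrac] at h1
    linarith
  have hpre0 : (0:ℝ) ≤ ψt ^ (xt.length - L) / ψ ^ (x.length - L) :=
    div_nonneg hψtpow0 hψpow0.le
  calc smoothedProb f y ψt xt
      ≤ ψt ^ (xt.length - L) / ψ ^ (x.length - L) * RHS0 + 1 - ψt ^ (xt.length - L) := hfinal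
    _ ≤ _ := by
        have := mul_le_mul_of_nonneg_left hRHS0le hpre0
        linarith
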